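/- Let f : X → ℝ be bounded and C-Lipschitz for some C > 0. Then for every s ∈ ℝ, the Fisher information of e^{sf} satisfies I(e^{sf}) ≤ C²·s²·∑_{x} e^{s f(x)} π(x). -/

import Mathlib

open Real Filter MeasureTheory Set

/-- `M₁(x) = ∑_{y ≠ x} k(x,y)`. -/
noncomputable def M1fn {X : Type*} (k : X → X → ℝ) (x : X) : ℝ :=
  ∑' y : {y : X // y ≠ x}, k x y

/-- The standing assumptions on the transition rates and the invariant probability
measure: nonnegative off-diagonal rates, summable rows, `k(x,x) = -M₁(x)`,
a strictly positive probability density and detailed balance. -/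
def MarkovSetting {X : Type*} (k : X → X → ℝ) (μ : X → ℝ) : Prop :=
  (∀ x y, x ≠ y → 0 ≤ k x y) ∧
  (∀ x : X, Summable fun y : {y : X // y ≠ x} => k x y) ∧
  (∀ x : X, k x x = -M1fn k x) ∧
  (∀ x, 0 < μ x) ∧ (∑' x, μ x) = 1 ∧
  (∀ x y, μ x * k x y = μ y * k y x)

/-- The entropy `Ent_μ(f)`. -/
noncomputable def entFn {X : Type*} (μ f : X → ℝ) : ℝ :=
  (∑' x, f x * Real.log (f x) * μ x) -
    (∑' x, f x * μ x) * Real.log (∑' x, f x * μ x)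

/-- The Fisher information `I(f) = (1/2) ∑_{x,y} k(x,y)(f(y)-f(x))(log f(y)-log f(x)) μ(x)`. -/
noncomputable def fisherFn {X : Type*} (k : X → X → ℝ) (μ f : X → ℝ) : ℝ :=
  (1/2) * ∑' p : X × X,
    k p.1 p.2 * (f p.2 - f p.1) * (Real.log (f p.2) - Real.log (f p.1)) * μ p.1

/-- Finiteness of the Fisher information. -/
def FisherFinite {X : Type*} (k : X → X → ℝ) (μ f : X → ℝ) : Prop :=
  Summable fun p : X × X =>
    k p.1 p.2 * (f p.2 - f p.1) * (Real.log (f p.2) - Real.log (f p.1)) * μ p.1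

/-- A growth function: strictly increasing, concave, `C¹` and positive on `(0,∞)`. -/
def GrowthFun (Φ : ℝ → ℝ) : Prop :=
  StrictMonoOn Φ (Ioi 0) ∧ ConcaveOn ℝ (Ioi 0) Φ ∧
    ContDiffOn ℝ 1 Φ (Ioi 0) ∧ ∀ r : ℝ, 0 < r → 0 < Φ r

/-- The entropy-information inequality `EI(Φ)`:
`Ent_μ(f) ≤ Φ(I(f))` for all probability densities `f ∈ P_*(X)` with finite entropy
and finite Fisher information. -/
def EIineq {X : Type*} (k : X → X → ℝ) (μ : X → ℝ) (Φ : ℝ → ℝ) : Prop :=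
  ∀ f : X → ℝ, (∀ x, 0 < f x) → (∑' x, f x * μ x) = 1 →
    (Summable fun x => f x * Real.log (f x) * μ x) →
    FisherFinite k μ f →
    entFn μ f ≤ Φ (fisherFn k μ f)

/-- `Γ(f)(x) = (1/2) ∑_y k(x,y)(f(y)-f(x))²`. -/
noncomputable def gammaFn {X : Type*} (k : X → X → ℝ) (f : X → ℝ) (x : X) : ℝ :=
  (1/2) * ∑' y, k x y * (f y - f x) ^ 2

/-- `f` is `C`-Lipschitz: `Γ(f)(x)` exists (finitely) at every point and `Γ(f) ≤ C²`. -/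
def LipBound {X : Type*} (k : X → X → ℝ) (f : X → ℝ) (C : ℝ) : Prop :=
  (∀ x : X, Summable fun y => k x y * (f y - f x) ^ 2) ∧
    ∀ x : X, gammaFn k f x ≤ C ^ 2

open scoped ENNReal

/-- The Fisher information as an extended nonnegative real (all summands are
nonnegative, so this is the honest value in `[0,∞]`). -/
noncomputable def fisherE {X : Type*} (k : X → X → ℝ) (μ f : X → ℝ) : ℝ≥0∞ :=
  (1/2 : ℝ≥0∞) * ∑' p : X × X, ENNReal.ofReal
    (k p.1 p.2 * (f p.2 - f p.1) * (Real.log (f p.2) - Real.log (f p.1)) * μ p.1)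

lemma aux_key_7 {t : ℝ} (ht : 0 ≤ t) : 2 * Real.exp t - 2 ≤ t * Real.exp t + t := by
  have hder : ∀ u : ℝ, HasDerivAt (fun u => u * Real.exp u + u - 2 * Real.exp u + 2)
      (u * Real.exp u - Real.exp u + 1) u := by
    intro u
    have h1 : HasDerivAt (fun u : ℝ => u * Real.exp u) (1 * Real.exp u + u * Real.exp u) u :=
      (hasDerivAt_id u).mul (Real.hasDerivAt_exp u)
    have h2 := ((h1.add (hasDerivAt_id u)).sub ((Real.hasDerivAt_exp u).const_mul 2)).add_const 2
    exact h2.congr_deriv (by ring)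
  have hmono : MonotoneOn (fun u => u * Real.exp u + u - 2 * Real.exp u + 2) (Set.Ici 0) := by
    apply monotoneOn_of_deriv_nonneg (convex_Ici 0)
    · exact fun u _ => (hder u).continuousAt.continuousWithinAt
    · exact fun u _ => (hder u).differentiableAt.differentiableWithinAt
    · intro u hu
      rw [(hder u).deriv]
      have h3 := Real.add_one_le_exp (-u)
      have h4 : Real.exp (-u) * Real.exp u = 1 := by
        rw [← Real.exp_add]; simp
      nlinarith [Real.exp_pos u, mul_le_mul_of_nonneg_right h3 (Real.exp_pos u).le]
  have h0 := hmono Set.self_mem_Ici ht ht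
  simp only [Real.exp_zero] at h0
  linarith

lemma aux_exp_7 (A B : ℝ) :
    (Real.exp A - Real.exp B) * (A - B) ≤ (A - B) ^ 2 * (Real.exp A + Real.exp B) / 2 := by
  wlog hAB : B ≤ A with H
  · have h := H B A (le_of_not_ge hAB)
    have e1 : (Real.exp A - Real.exp B) * (A - B) = (Real.exp B - Real.exp A) * (B - A) := by ring
    have e2 : (A - B) ^ 2 * (Real.exp A + Real.exp B) / 2
        = (B - A) ^ 2 * (Real.exp B + Real.exp A) / 2 := by ring
    rw [e1, e2]; exact h
  have ht0 : 0 ≤ A - B := by linarith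
  have hk := aux_key_7 ht0
  have hA : Real.exp A = Real.exp B * Real.exp (A - B) := by
    rw [← Real.exp_add]; ring_nf
  have hB := (Real.exp_pos B).le
  nlinarith [mul_le_mul_of_nonneg_left (mul_le_mul_of_nonneg_left hk ht0) hB]

theorem aux_stmt_7 {X : Type*} [Countable X] (k : X → X → ℝ) (μ : X → ℝ)
    (hk_nonneg : ∀ x y, x ≠ y → 0 ≤ k x y) (hμpos : ∀ x, 0 < μ x)
    (hμsum1 : (∑' x, μ x) = 1) (hdb : ∀ x y, μ x * k x y = μ y * k y x)
    (f : X → ℝ) (hbdd : ∃ B : ℝ, ∀ x, |f x| ≤ B)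
    (C : ℝ) (hlip : LipBound k f C) (s : ℝ) :
    (1/2 : ℝ≥0∞) * ∑' p : X × X, ENNReal.ofReal
      (k p.1 p.2 * (Real.exp (s * f p.2) - Real.exp (s * f p.1)) *
        (Real.log (Real.exp (s * f p.2)) - Real.log (Real.exp (s * f p.1))) * μ p.1) ≤
      ENNReal.ofReal (C ^ 2 * s ^ 2 * ∑' x, Real.exp (s * f x) * μ x) := by
  obtain ⟨B, hB⟩ := hbdd
  set g : X → ℝ := fun x => Real.exp (s * f x) with hg
  have hμsum : Summable μ := by
    by_contra h
    rw [tsum_eq_zero_of_not_summable h] at hμsum1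
    norm_num at hμsum1
  set V : X × X → ℝ≥0∞ := fun p =>
    ENNReal.ofReal (s ^ 2 * g p.1 * μ p.1 * (1/2 * k p.1 p.2 * (f p.2 - f p.1) ^ 2)) with hV
  -- pointwise bound
  have hpt : ∀ p : X × X, ENNReal.ofReal
      (k p.1 p.2 * (g p.2 - g p.1) * (Real.log (g p.2) - Real.log (g p.1)) * μ p.1)
      ≤ V p + V p.swap := by
    rintro ⟨x, y⟩
    by_cases hxy : x = y
    · subst hxy; simp
    · have hk0 : 0 ≤ k x y := hk_nonneg x y hxy
      have hμ0 : 0 ≤ μ x := (hμpos x).le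
      have hdbc : k x y * μ x = k y x * μ y := by linear_combination hdb x y
      have main := aux_exp_7 (s * f y) (s * f x)
      have hgy : g y = Real.exp (s * f y) := rfl
      have hgx : g x = Real.exp (s * f x) := rfl
      have hlogy : Real.log (g y) = s * f y := Real.log_exp _
      have hlogx : Real.log (g x) = s * f x := Real.log_exp _
      have hreal : k x y * (g y - g x) * (Real.log (g y) - Real.log (g x)) * μ x ≤
          s ^ 2 * g x * μ x * (1/2 * k x y * (f y - f x) ^ 2) +
          s ^ 2 * g y * μ y * (1/2 * k y x * (f x - f y) ^ 2) := by
        rw [hlogy, hlogx]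
        have h5 := mul_le_mul_of_nonneg_left main (mul_nonneg hk0 hμ0)
        have e1 : k x y * (g y - g x) * (s * f y - s * f x) * μ x
            = k x y * μ x * ((Real.exp (s * f y) - Real.exp (s * f x)) *
                (s * f y - s * f x)) := by rw [hgy, hgx]; ring
        have e2 : k x y * μ x * ((s * f y - s * f x) ^ 2 *
                (Real.exp (s * f y) + Real.exp (s * f x)) / 2)
            = s ^ 2 * g x * μ x * (1/2 * k x y * (f y - f x) ^ 2) +
              s ^ 2 * g y * μ y * (1/2 * k y x * (f x - f y) ^ 2) := by
          rw [hgy, hgx]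
          linear_combination (s ^ 2 * (f y - f x) ^ 2 / 2 * Real.exp (s * f y)) * hdbc
        rw [e1, ← e2]
        exact h5
      calc ENNReal.ofReal (k x y * (g y - g x) * (Real.log (g y) - Real.log (g x)) * μ x)
          ≤ ENNReal.ofReal (s ^ 2 * g x * μ x * (1/2 * k x y * (f y - f x) ^ 2) +
              s ^ 2 * g y * μ y * (1/2 * k y x * (f x - f y) ^ 2)) :=
            ENNReal.ofReal_le_ofReal hreal
        _ ≤ ENNReal.ofReal (s ^ 2 * g x * μ x * (1/2 * k x y * (f y - f x) ^ 2)) +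
            ENNReal.ofReal (s ^ 2 * g y * μ y * (1/2 * k y x * (f x - f y) ^ 2)) :=
            ENNReal.ofReal_add_le
        _ = V (x, y) + V (x, y).swap := rfl
  -- swap symmetry
  have hswap : ∑' p : X × X, V p.swap = ∑' p : X × X, V p :=
    Equiv.tsum_eq (Equiv.prodComm X X) V
  -- bound on ∑' V
  have hgμ_sum : Summable (fun x => g x * μ x) := by
    apply Summable.of_nonneg_of_le
      (fun x => mul_nonneg (Real.exp_pos _).le (hμpos x).le)
      (fun x => ?_) (hμsum.mul_left (Real.exp (|s| * B)))
    have h1 : s * f x ≤ |s| * B := by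
      calc s * f x ≤ |s * f x| := le_abs_self _
        _ = |s| * |f x| := abs_mul s (f x)
        _ ≤ |s| * B := mul_le_mul_of_nonneg_left (hB x) (abs_nonneg s)
    exact mul_le_mul_of_nonneg_right (Real.exp_le_exp.2 h1) (hμpos x).le
  have hVsum : ∑' p : X × X, V p ≤
      ENNReal.ofReal (C ^ 2 * s ^ 2 * ∑' x, g x * μ x) := by
    rw [ENNReal.tsum_prod']
    have hinner : ∀ x : X, (∑' y, V (x, y)) ≤
        ENNReal.ofReal (C ^ 2 * s ^ 2 * (g x * μ x)) := by
      intro x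
      have hc : 0 ≤ s ^ 2 * g x * μ x :=
        mul_nonneg (mul_nonneg (sq_nonneg s) (Real.exp_pos _).le) (hμpos x).le
      have htnn : ∀ y, 0 ≤ 1/2 * k x y * (f y - f x) ^ 2 := by
        intro y
        by_cases hxy : x = y
        · subst hxy; simp
        · exact mul_nonneg (mul_nonneg (by norm_num) (hk_nonneg x y hxy)) (sq_nonneg _)
      have htsum : Summable (fun y => 1/2 * k x y * (f y - f x) ^ 2) := by
        apply Summable.congr ((hlip.1 x).mul_left (1/2))
        intro y; ring
      have hts : (∑' y, 1/2 * k x y * (f y - f x) ^ 2) = gammaFn k f x := by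
        rw [gammaFn, ← tsum_mul_left]
        exact tsum_congr fun y => by ring
      calc (∑' y, V (x, y))
          = ∑' y, ENNReal.ofReal (s ^ 2 * g x * μ x) *
              ENNReal.ofReal (1/2 * k x y * (f y - f x) ^ 2) := by
            refine tsum_congr fun y => ?_
            rw [hV]
            exact ENNReal.ofReal_mul hc
        _ = ENNReal.ofReal (s ^ 2 * g x * μ x) *
              ∑' y, ENNReal.ofReal (1/2 * k x y * (f y - f x) ^ 2) :=
            ENNReal.tsum_mul_left
        _ = ENNReal.ofReal (s ^ 2 * g x * μ x) *
              ENNReal.ofReal (∑' y, 1/2 * k x y * (f y - f x) ^ 2) := by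
            rw [← ENNReal.ofReal_tsum_of_nonneg htnn htsum]
        _ ≤ ENNReal.ofReal (s ^ 2 * g x * μ x) * ENNReal.ofReal (C ^ 2) := by
            gcongr
            rw [hts]; exact hlip.2 x
        _ = ENNReal.ofReal (C ^ 2 * s ^ 2 * (g x * μ x)) := by
            rw [← ENNReal.ofReal_mul hc]
            congr 1; ring
    calc (∑' x, ∑' y, V (x, y)) ≤ ∑' x, ENNReal.ofReal (C ^ 2 * s ^ 2 * (g x * μ x)) :=
          ENNReal.tsum_le_tsum hinner
      _ = ENNReal.ofReal (∑' x, C ^ 2 * s ^ 2 * (g x * μ x)) := by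
          rw [← ENNReal.ofReal_tsum_of_nonneg]
          · intro x
            exact mul_nonneg (mul_nonneg (sq_nonneg C) (sq_nonneg s))
              (mul_nonneg (Real.exp_pos _).le (hμpos x).le)
          · exact hgμ_sum.mul_left _
      _ = ENNReal.ofReal (C ^ 2 * s ^ 2 * ∑' x, g x * μ x) := by
          rw [tsum_mul_left]
  -- assemble
  calc (1/2 : ℝ≥0∞) * ∑' p : X × X, ENNReal.ofReal
        (k p.1 p.2 * (g p.2 - g p.1) * (Real.log (g p.2) - Real.log (g p.1)) * μ p.1)
      ≤ (1/2 : ℝ≥0∞) * ∑' p : X × X, (V p + V p.swap) :=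
        mul_le_mul_right (ENNReal.tsum_le_tsum hpt) _
    _ = (1/2 : ℝ≥0∞) * (∑' p : X × X, V p + ∑' p : X × X, V p.swap) := by
        rw [ENNReal.tsum_add]
    _ = (1/2 : ℝ≥0∞) * (2 * ∑' p : X × X, V p) := by rw [hswap]; ring
    _ = ∑' p : X × X, V p := by
        rw [← mul_assoc]
        have h2 : (1/2 : ℝ≥0∞) * 2 = 1 := by
          rw [one_div]
          exact ENNReal.inv_mul_cancel two_ne_zero ENNReal.ofNat_ne_top
        rw [h2, one_mul]
    _ ≤ ENNReal.ofReal (C ^ 2 * s ^ 2 * ∑' x, g x * μ x) := hVsum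

/-- Lemma 5.3: for a bounded `C`-Lipschitz function `f`,
`I(e^{sf}) ≤ C² s² ∫ e^{sf} dμ` for every `s ∈ ℝ`. -/
theorem stmt_7 {X : Type*} [Countable X] (k : X → X → ℝ) (μ : X → ℝ)
    (hMS : MarkovSetting k μ)
    (f : X → ℝ) (hbdd : ∃ B : ℝ, ∀ x, |f x| ≤ B)
    (C : ℝ) (hC : 0 < C) (hlip : LipBound k f C) (s : ℝ) :
    fisherE k μ (fun x => Real.exp (s * f x)) ≤
      ENNReal.ofReal (C ^ 2 * s ^ 2 * ∑' x, Real.exp (s * f x) * μ x) := by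
  obtain ⟨hk_nonneg, -, -, hμpos, hμsum1, hdb⟩ := hMS
  exact aux_stmt_7 k μ hk_nonneg hμpos hμsum1 hdb f hbdd C hlip s
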